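/- arXiv:1207.5201 — 4 statements merged into one kernel-verified Lean document; each statement's English description precedes it below -/
import Mathlib

section
/- Let n ≥ 1, α > 0, and let f : [0, α) → ℝ be a continuous function with f(t) ≠ 0 for all t ∈ [0, α). Suppose that for every Hermitian positive semidefinite matrix A ∈ M_n(ℂ) with all eigenvalues in [0, α) and every matrix C ∈ M_n(ℂ) with operator norm ‖C‖ ≤ 1, one has C* f(A) C ≤ f(C* A C). Then the function g(t) = t / f(t) is n-monotone on (0, α). -/
open Matrix
open scoped ComplexOrder Matrix.Norms.L2Operator


private lemma contOn_spec {n : ℕ} (f : ℝ → ℝ) (X : Matrix (Fin n) (Fin n) ℂ) :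
    ContinuousOn f (spectrum ℝ X) := by
  have h1 : Finite (spectrum ℝ X) := X.finite_real_spectrum
  have : DiscreteTopology (spectrum ℝ X) := Finite.instDiscreteTopology
  rw [continuousOn_iff_continuous_restrict]
  exact continuous_of_discreteTopology

private lemma cfc_isHermitian {n : ℕ} (f : ℝ → ℝ) (X : Matrix (Fin n) (Fin n) ℂ) :
    (cfc f X).IsHermitian := cfc_predicate f X

private lemma cfc_mul_cfc' {n : ℕ} (X : Matrix (Fin n) (Fin n) ℂ) (p q s : ℝ → ℝ)
    (h : ∀ t ∈ spectrum ℝ X, p t * q t = s t) :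
    cfc p X * cfc q X = cfc s X := by
  rw [← cfc_mul p q X (contOn_spec p X) (contOn_spec q X)]
  exact cfc_congr h

private lemma conj_sub_posSemidef {n : ℕ} {P Q R : Matrix (Fin n) (Fin n) ℂ}
    (h : (P - Q).PosSemidef) (hR : R.IsHermitian) :
    (R * P * R - R * Q * R).PosSemidef := by
  have h2 := h.conjTranspose_mul_mul_same (B := R)
  have e : Rᴴ * (P - Q) * R = R * P * R - R * Q * R := by
    rw [hR.eq, mul_sub, sub_mul]
  rwa [e] at h2

private lemma spec_nonneg_of_psd {n : ℕ} {X : Matrix (Fin n) (Fin n) ℂ}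
    (hX : X.PosSemidef) : ∀ t ∈ spectrum ℝ X, 0 ≤ t := by
  intro t ht
  rw [Matrix.IsHermitian.spectrum_real_eq_range_eigenvalues hX.1] at ht
  obtain ⟨i, rfl⟩ := ht
  exact hX.eigenvalues_nonneg i

private lemma cfc_posSemidef' {n : ℕ} {X : Matrix (Fin n) (Fin n) ℂ} (hX : X.IsHermitian)
    {f : ℝ → ℝ} (hf : ∀ t ∈ spectrum ℝ X, 0 ≤ f t) : (cfc f X).PosSemidef := by
  have hX' : IsSelfAdjoint X := hX
  have hherm : (cfc f X).IsHermitian := cfc_isHermitian f X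
  apply hherm.posSemidef_iff_eigenvalues_nonneg.mpr
  intro i
  have hmem := hherm.eigenvalues_mem_spectrum_real i
  rw [cfc_map_spectrum f X hX' (contOn_spec f X)] at hmem
  obtain ⟨t, ht, hfe⟩ := hmem
  exact hfe ▸ hf t ht

private lemma quad_eq {n : ℕ} (X : Matrix (Fin n) (Fin n) ℂ) (x : EuclideanSpace ℂ (Fin n)) :
    star (x : Fin n → ℂ) ⬝ᵥ ((1 - Xᴴ * X) *ᵥ x) =
      ((‖x‖ ^ 2 : ℝ) : ℂ) - ((‖(EuclideanSpace.equiv (Fin n) ℂ).symm (X *ᵥ x)‖ ^ 2 : ℝ) : ℂ) := by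
  have key : ∀ y : EuclideanSpace ℂ (Fin n), star (y : Fin n → ℂ) ⬝ᵥ (y : Fin n → ℂ) =
      ((‖y‖ ^ 2 : ℝ) : ℂ) := by
    intro y
    have := inner_self_eq_norm_sq_to_K (𝕜 := ℂ) y
    rw [PiLp.inner_apply] at this
    simpa [dotProduct, RCLike.inner_apply, mul_comm, RCLike.mul_conj, RCLike.conj_mul] using this
  have h1 : star (x : Fin n → ℂ) ⬝ᵥ ((Xᴴ * X) *ᵥ x) =
      star (X *ᵥ x) ⬝ᵥ (X *ᵥ x) := by
    rw [← mulVec_mulVec, dotProduct_mulVec, ← star_mulVec]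
  have h2 : star (X *ᵥ (x : Fin n → ℂ)) ⬝ᵥ (X *ᵥ x) =
      ((‖(EuclideanSpace.equiv (Fin n) ℂ).symm (X *ᵥ x)‖ ^ 2 : ℝ) : ℂ) :=
    key ((EuclideanSpace.equiv (Fin n) ℂ).symm (X *ᵥ x))
  rw [sub_mulVec, one_mulVec, dotProduct_sub, h1, key x, h2]

private lemma norm_le_one_iff_psd {n : ℕ} (X : Matrix (Fin n) (Fin n) ℂ) :
    ‖X‖ ≤ 1 ↔ ((1 : Matrix (Fin n) (Fin n) ℂ) - Xᴴ * X).PosSemidef := by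
  constructor
  · intro hX
    refine posSemidef_iff_dotProduct_mulVec.mpr ⟨?_, ?_⟩
    · exact Matrix.isHermitian_one.sub (Matrix.posSemidef_conjTranspose_mul_self X).1
    · intro x
      let x' : EuclideanSpace ℂ (Fin n) := (EuclideanSpace.equiv (Fin n) ℂ).symm x
      have hb : ‖(EuclideanSpace.equiv (Fin n) ℂ).symm (X *ᵥ x')‖ ≤ ‖x'‖ := by
        calc ‖(EuclideanSpace.equiv (Fin n) ℂ).symm (X *ᵥ x')‖ ≤ ‖X‖ * ‖x'‖ :=
              X.l2_opNorm_mulVec x'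
        _ ≤ 1 * ‖x'‖ := by gcongr
        _ = ‖x'‖ := one_mul _
      have hnn : (0:ℝ) ≤ ‖x'‖ ^ 2 - ‖(EuclideanSpace.equiv (Fin n) ℂ).symm (X *ᵥ x')‖ ^ 2 := by
        have := pow_le_pow_left₀ (norm_nonneg _) hb 2
        linarith
      show (0 : ℂ) ≤ star x ⬝ᵥ ((1 - Xᴴ * X) *ᵥ x)
      have hq : star x ⬝ᵥ ((1 - Xᴴ * X) *ᵥ x) =
          ((‖x'‖ ^ 2 : ℝ) : ℂ) - ((‖(EuclideanSpace.equiv (Fin n) ℂ).symm (X *ᵥ x')‖ ^ 2 : ℝ) : ℂ) :=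
        quad_eq X x'
      rw [hq, ← Complex.ofReal_sub]
      exact Complex.zero_le_real.mpr hnn
  · intro hpsd
    rw [Matrix.l2_opNorm_def]
    apply ContinuousLinearMap.opNorm_le_bound _ zero_le_one
    intro x
    have happ : ((Matrix.toEuclideanLin.trans LinearMap.toContinuousLinearMap) X) x =
        (EuclideanSpace.equiv (Fin n) ℂ).symm (X *ᵥ x) := rfl
    rw [happ, one_mul]
    have h0 := hpsd.dotProduct_mulVec_nonneg (x : Fin n → ℂ)
    rw [quad_eq X x, ← Complex.ofReal_sub] at h0
    have hr : (0:ℝ) ≤ ‖x‖ ^ 2 - ‖(EuclideanSpace.equiv (Fin n) ℂ).symm (X *ᵥ x)‖ ^ 2 :=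
      Complex.zero_le_real.mp h0
    nlinarith [norm_nonneg ((EuclideanSpace.equiv (Fin n) ℂ).symm (X *ᵥ x)), norm_nonneg x,
      sq_nonneg (‖x‖ + ‖(EuclideanSpace.equiv (Fin n) ℂ).symm (X *ᵥ x)‖)]

private noncomputable def rf : ℝ → ℝ := fun t => (Real.sqrt t)⁻¹
private noncomputable def wf (f : ℝ → ℝ) : ℝ → ℝ := fun t => rf t * (f t * rf t)
private noncomputable def uf (f : ℝ → ℝ) : ℝ → ℝ := fun t => (Real.sqrt (wf f t))⁻¹
private noncomputable def vf (f : ℝ → ℝ) : ℝ → ℝ := fun t => Real.sqrt (wf f t)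

private lemma sqrt_ne_zero_of_pos {t : ℝ} (ht : 0 < t) : Real.sqrt t ≠ 0 :=
  ne_of_gt (Real.sqrt_pos.mpr ht)

private lemma wf_eq {f : ℝ → ℝ} {t : ℝ} (ht : 0 < t) : wf f t = f t / t := by
  have h1 : Real.sqrt t * Real.sqrt t = t := Real.mul_self_sqrt ht.le
  have h2 : Real.sqrt t ≠ 0 := sqrt_ne_zero_of_pos ht
  unfold wf rf
  field_simp
  rw [Real.sq_sqrt ht.le]; ring

private lemma wf_pos {f : ℝ → ℝ} {t : ℝ} (ht : 0 < t) (hf : 0 < f t) : 0 < wf f t := by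
  rw [wf_eq ht]; exact div_pos hf ht

private lemma rf_mul_id_mul_rf {t : ℝ} (ht : 0 < t) : rf t * t * rf t = 1 := by
  have h1 : Real.sqrt t * Real.sqrt t = t := Real.mul_self_sqrt ht.le
  have h2 : Real.sqrt t ≠ 0 := sqrt_ne_zero_of_pos ht
  unfold rf
  field_simp
  rw [Real.sq_sqrt ht.le]

private lemma rf_mul_sqrt {t : ℝ} (ht : 0 < t) : rf t * Real.sqrt t = 1 :=
  inv_mul_cancel₀ (sqrt_ne_zero_of_pos ht)

private lemma sqrt_mul_rf {t : ℝ} (ht : 0 < t) : Real.sqrt t * rf t = 1 :=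
  mul_inv_cancel₀ (sqrt_ne_zero_of_pos ht)

private lemma uf_mul_wf_mul_uf {f : ℝ → ℝ} {t : ℝ} (hw : 0 < wf f t) :
    uf f t * wf f t * uf f t = 1 := by
  have h1 : Real.sqrt (wf f t) * Real.sqrt (wf f t) = wf f t := Real.mul_self_sqrt hw.le
  have h2 : Real.sqrt (wf f t) ≠ 0 := sqrt_ne_zero_of_pos hw
  unfold uf
  field_simp
  rw [Real.sq_sqrt hw.le]

private lemma vf_mul_vf {f : ℝ → ℝ} {t : ℝ} (hw : 0 ≤ wf f t) : vf f t * vf f t = wf f t :=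
  Real.mul_self_sqrt hw

private lemma uf_mul_vf {f : ℝ → ℝ} {t : ℝ} (hw : 0 < wf f t) : uf f t * vf f t = 1 :=
  inv_mul_cancel₀ (sqrt_ne_zero_of_pos hw)

private lemma vf_mul_uf {f : ℝ → ℝ} {t : ℝ} (hw : 0 < wf f t) : vf f t * uf f t = 1 :=
  mul_inv_cancel₀ (sqrt_ne_zero_of_pos hw)

private lemma uf_mul_uf {f : ℝ → ℝ} {t : ℝ} (ht : 0 < t) (hf : 0 < f t) :
    uf f t * uf f t = t / f t := by
  have hw : 0 < wf f t := wf_pos ht hf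
  unfold uf
  rw [← mul_inv, Real.mul_self_sqrt hw.le, wf_eq ht, inv_div]


/-- A real function `h` is `n`-monotone on a set `I ⊆ ℝ` if for all Hermitian `n × n`
complex matrices `A, B` with spectrum (i.e. all eigenvalues) in `I`, `A ≤ B` in the
Loewner order (i.e. `B − A` positive semidefinite) implies `h(A) ≤ h(B)`, where `h` is
applied via the continuous functional calculus `cfc`. -/
def NMonotoneOn (n : ℕ) (h : ℝ → ℝ) (I : Set ℝ) : Prop :=
  ∀ A B : Matrix (Fin n) (Fin n) ℂ, A.IsHermitian → B.IsHermitian →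
    spectrum ℝ A ⊆ I → spectrum ℝ B ⊆ I →
    (B - A).PosSemidef → (cfc h B - cfc h A).PosSemidef

/-- If `f : [0, α) → ℝ` is continuous and nonvanishing, and for every Hermitian positive
semidefinite `A ∈ Mₙ(ℂ)` with eigenvalues in `[0, α)` and every contraction `C`
(operator norm `‖C‖ ≤ 1`) one has `C* f(A) C ≤ f(C* A C)` in the Loewner order, then
`g(t) = t / f(t)` is `n`-monotone on `(0, α)`. -/
theorem transformer_implies_quotient_monotone
    (n : ℕ) (hn : 1 ≤ n) (α : ℝ) (hα : 0 < α) (f : ℝ → ℝ)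
    (hfc : ContinuousOn f (Set.Ico 0 α))
    (hfne : ∀ t ∈ Set.Ico (0 : ℝ) α, f t ≠ 0)
    (htrans : ∀ A : Matrix (Fin n) (Fin n) ℂ, A.PosSemidef → spectrum ℝ A ⊆ Set.Ico 0 α →
      ∀ C : Matrix (Fin n) (Fin n) ℂ, ‖C‖ ≤ 1 →
        (cfc f (Cᴴ * A * C) - Cᴴ * cfc f A * C).PosSemidef) :
    NMonotoneOn n (fun t => t / f t) (Set.Ioo 0 α) := by
  have hnonempty : Nonempty (Fin n) := Fin.pos_iff_nonempty.mp hn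
  have h0mem : (0:ℝ) ∈ Set.Ico (0:ℝ) α := ⟨le_refl _, hα⟩
  have hzero : (cfc f (0 : Matrix (Fin n) (Fin n) ℂ)).PosSemidef := by
    have h := htrans 0 Matrix.PosSemidef.zero
      (by rw [spectrum.zero_eq]; intro t ht; rw [Set.mem_singleton_iff.mp ht]; exact h0mem)
      0 (by simp)
    simpa using h
  have hf0 : 0 < f 0 := by
    have h0sa : IsSelfAdjoint (0 : Matrix (Fin n) (Fin n) ℂ) := cfc_predicate_zero ℝ
    have hmem : f 0 ∈ spectrum ℝ (cfc f (0 : Matrix (Fin n) (Fin n) ℂ)) := by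
      rw [cfc_map_spectrum f 0 h0sa (contOn_spec f 0), spectrum.zero_eq, Set.image_singleton]
      rfl
    exact lt_of_le_of_ne (spec_nonneg_of_psd hzero _ hmem) (Ne.symm (hfne 0 h0mem))
  have hfpos : ∀ t ∈ Set.Ico (0:ℝ) α, 0 < f t := by
    intro t ht
    by_contra hcon
    push_neg at hcon
    have hlt : f t < 0 := lt_of_le_of_ne hcon (hfne t ht)
    have hsub : Set.Icc (0:ℝ) t ⊆ Set.Ico 0 α := fun s hs => ⟨hs.1, lt_of_le_of_lt hs.2 ht.2⟩
    obtain ⟨s, hs, hfs⟩ := intermediate_value_Icc' ht.1 (hfc.mono hsub) ⟨hlt.le, hf0.le⟩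
    exact hfne s (hsub hs) hfs
  intro A B hA hB hsA hsB hBA
  have hA' : IsSelfAdjoint A := hA
  have hB' : IsSelfAdjoint B := hB
  have hspA : ∀ t ∈ spectrum ℝ A, 0 < t ∧ t < α := fun t ht => ⟨(hsA ht).1, (hsA ht).2⟩
  have hspB : ∀ t ∈ spectrum ℝ B, 0 < t ∧ t < α := fun t ht => ⟨(hsB ht).1, (hsB ht).2⟩
  have hfA : ∀ t ∈ spectrum ℝ A, 0 < f t :=
    fun t ht => hfpos t ⟨(hspA t ht).1.le, (hspA t ht).2⟩
  have hfB : ∀ t ∈ spectrum ℝ B, 0 < f t :=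
    fun t ht => hfpos t ⟨(hspB t ht).1.le, (hspB t ht).2⟩
  have hwA : ∀ t ∈ spectrum ℝ A, 0 < wf f t := fun t ht => wf_pos (hspA t ht).1 (hfA t ht)
  have hwB : ∀ t ∈ spectrum ℝ B, 0 < wf f t := fun t ht => wf_pos (hspB t ht).1 (hfB t ht)
  set sA := cfc Real.sqrt A with hsAdef
  set rB := cfc rf B with hrBdef
  have hsAh : sA.IsHermitian := cfc_isHermitian _ A
  have hrBh : rB.IsHermitian := cfc_isHermitian _ B
  set C := rB * sA with hCdef
  have hCH : Cᴴ = sA * rB := by rw [hCdef, conjTranspose_mul, hsAh.eq, hrBh.eq]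
  have esA : sA * sA = A := by
    rw [hsAdef, cfc_mul_cfc' A Real.sqrt Real.sqrt id
      (fun t ht => Real.mul_self_sqrt (hspA t ht).1.le), cfc_id ℝ A hA']
  have erB : rB * B * rB = 1 := by
    have e1 : cfc rf B * cfc (id : ℝ → ℝ) B * cfc rf B = cfc (fun _ => (1:ℝ)) B := by
      rw [cfc_mul_cfc' B rf id (fun t => rf t * t) (fun t _ => rfl),
        cfc_mul_cfc' B (fun t => rf t * t) rf (fun _ => (1:ℝ))
          (fun t ht => rf_mul_id_mul_rf (hspB t ht).1)]
    rw [cfc_id ℝ B hB', cfc_const_one ℝ B hB'] at e1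
    rw [hrBdef]
    exact e1
  have eCCH : C * Cᴴ = rB * A * rB := by
    rw [hCH, hCdef, show rB * sA * (sA * rB) = rB * (sA * sA) * rB by noncomm_ring, esA]
  have h1CC : ((1 : Matrix (Fin n) (Fin n) ℂ) - C * Cᴴ).PosSemidef := by
    have h := conj_sub_posSemidef hBA hrBh
    rwa [erB, ← eCCH] at h
  have hCnorm : ‖C‖ ≤ 1 := by
    have h2 : ‖Cᴴ‖ ≤ 1 := by
      rw [norm_le_one_iff_psd]
      rwa [conjTranspose_conjTranspose]
    rwa [Matrix.l2_opNorm_conjTranspose] at h2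
  have hBpsd : B.PosSemidef :=
    hB.posSemidef_iff_eigenvalues_nonneg.mpr fun i =>
      (hspB _ (hB.eigenvalues_mem_spectrum_real i)).1.le
  have hBsub : spectrum ℝ B ⊆ Set.Ico 0 α := fun t ht => ⟨(hspB t ht).1.le, (hspB t ht).2⟩
  have hT := htrans B hBpsd hBsub C hCnorm
  have eCBC : Cᴴ * B * C = A := by
    rw [hCH, hCdef, show sA * rB * B * (rB * sA) = sA * (rB * B * rB) * sA by noncomm_ring,
      erB, mul_one, esA]
  have erfB : rB * cfc f B * rB = cfc (wf f) B := by
    have e1 : cfc rf B * cfc f B * cfc rf B = cfc (wf f) B := by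
      rw [cfc_mul_cfc' B rf f (fun t => rf t * f t) (fun t _ => rfl),
        cfc_mul_cfc' B (fun t => rf t * f t) rf (wf f) (fun t _ => by unfold wf; ring)]
    rw [hrBdef]; exact e1
  have eCfBC : Cᴴ * cfc f B * C = sA * cfc (wf f) B * sA := by
    rw [hCH, hCdef, show sA * rB * cfc f B * (rB * sA) = sA * (rB * cfc f B * rB) * sA
      by noncomm_ring, erfB]
  rw [eCBC, eCfBC] at hT
  set rA := cfc rf A with hrAdef
  have hrAh : rA.IsHermitian := cfc_isHermitian _ A
  have hT2 := conj_sub_posSemidef hT hrAh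
  have erfA : rA * cfc f A * rA = cfc (wf f) A := by
    have e1 : cfc rf A * cfc f A * cfc rf A = cfc (wf f) A := by
      rw [cfc_mul_cfc' A rf f (fun t => rf t * f t) (fun t _ => rfl),
        cfc_mul_cfc' A (fun t => rf t * f t) rf (wf f) (fun t _ => by unfold wf; ring)]
    rw [hrAdef]; exact e1
  have erAsA : rA * sA = 1 := by
    rw [hrAdef, hsAdef, cfc_mul_cfc' A rf Real.sqrt (fun _ => (1:ℝ))
      (fun t ht => rf_mul_sqrt (hspA t ht).1), cfc_const_one ℝ A hA']
  have esArA : sA * rA = 1 := by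
    rw [hsAdef, hrAdef, cfc_mul_cfc' A Real.sqrt rf (fun _ => (1:ℝ))
      (fun t ht => sqrt_mul_rf (hspA t ht).1), cfc_const_one ℝ A hA']
  have emid : rA * (sA * cfc (wf f) B * sA) * rA = cfc (wf f) B := by
    rw [show rA * (sA * cfc (wf f) B * sA) * rA = (rA * sA) * cfc (wf f) B * (sA * rA)
      by noncomm_ring, erAsA, esArA, one_mul, mul_one]
  rw [erfA, emid] at hT2
  set uA := cfc (uf f) A with huAdef
  set uB := cfc (uf f) B with huBdef
  set vB := cfc (vf f) B with hvBdef
  have huAh : uA.IsHermitian := cfc_isHermitian _ A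
  have huBh : uB.IsHermitian := cfc_isHermitian _ B
  have hvBh : vB.IsHermitian := cfc_isHermitian _ B
  have hT3 := conj_sub_posSemidef hT2 huAh
  have euwA : uA * cfc (wf f) A * uA = 1 := by
    have e1 : cfc (uf f) A * cfc (wf f) A * cfc (uf f) A = cfc (fun _ => (1:ℝ)) A := by
      rw [cfc_mul_cfc' A (uf f) (wf f) (fun t => uf f t * wf f t) (fun t _ => rfl),
        cfc_mul_cfc' A (fun t => uf f t * wf f t) (uf f) (fun _ => (1:ℝ))
          (fun t ht => uf_mul_wf_mul_uf (hwA t ht))]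
    rw [cfc_const_one ℝ A hA'] at e1
    rw [huAdef]; exact e1
  rw [euwA] at hT3
  set Z := vB * uA with hZdef
  have hZH : Zᴴ = uA * vB := by rw [hZdef, conjTranspose_mul, huAh.eq, hvBh.eq]
  have evv : vB * vB = cfc (wf f) B := by
    rw [hvBdef, cfc_mul_cfc' B (vf f) (vf f) (wf f) (fun t ht => vf_mul_vf (hwB t ht).le)]
  have eZZ : Zᴴ * Z = uA * cfc (wf f) B * uA := by
    rw [hZH, hZdef, show uA * vB * (vB * uA) = uA * (vB * vB) * uA by noncomm_ring, evv]
  have hZnorm : ‖Z‖ ≤ 1 := by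
    rw [norm_le_one_iff_psd, eZZ]
    exact hT3
  have hZH1 : ((1 : Matrix (Fin n) (Fin n) ℂ) - Z * Zᴴ).PosSemidef := by
    have h2 : ‖Zᴴ‖ ≤ 1 := by rwa [Matrix.l2_opNorm_conjTranspose]
    have h3 := (norm_le_one_iff_psd Zᴴ).mp h2
    rwa [conjTranspose_conjTranspose] at h3
  have euu_A : uA * uA = cfc (fun t => t / f t) A := by
    rw [huAdef, cfc_mul_cfc' A (uf f) (uf f) (fun t => t / f t)
      (fun t ht => uf_mul_uf (hspA t ht).1 (hfA t ht))]
  have eZZH : Z * Zᴴ = vB * cfc (fun t => t / f t) A * vB := by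
    rw [hZH, hZdef, show vB * uA * (uA * vB) = vB * (uA * uA) * vB by noncomm_ring, euu_A]
  rw [eZZH] at hZH1
  have hT4 := conj_sub_posSemidef hZH1 huBh
  have euu_B : uB * uB = cfc (fun t => t / f t) B := by
    rw [huBdef, cfc_mul_cfc' B (uf f) (uf f) (fun t => t / f t)
      (fun t ht => uf_mul_uf (hspB t ht).1 (hfB t ht))]
  have euv : uB * vB = 1 := by
    rw [huBdef, hvBdef, cfc_mul_cfc' B (uf f) (vf f) (fun _ => (1:ℝ))
      (fun t ht => uf_mul_vf (hwB t ht)), cfc_const_one ℝ B hB']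
  have hvu : vB * uB = 1 := by
    rw [hvBdef, huBdef, cfc_mul_cfc' B (vf f) (uf f) (fun _ => (1:ℝ))
      (fun t ht => vf_mul_uf (hwB t ht)), cfc_const_one ℝ B hB']
  have e1B : uB * (1 : Matrix (Fin n) (Fin n) ℂ) * uB = cfc (fun t => t / f t) B := by
    rw [mul_one, euu_B]
  have e2B : uB * (vB * cfc (fun t => t / f t) A * vB) * uB = cfc (fun t => t / f t) A := by
    rw [show uB * (vB * cfc (fun t => t / f t) A * vB) * uB
        = (uB * vB) * cfc (fun t => t / f t) A * (vB * uB) by noncomm_ring, euv, hvu,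
      one_mul, mul_one]
  rw [e1B, e2B] at hT4
  exact hT4
end

section
/- Let A = [[1,1],[1,1]] and B = [[2,1],[1,2]] regarded as 2×2 complex matrices. Then A is positive semidefinite, B is positive definite, A ≤ B in the Loewner order, A B⁻¹ A = (2/3) A, and consequently Tr(A B⁻¹ A) < Tr(A). In particular the function f(t) = t² (with g(t) = t/f(t) = 1/t, so that f(A)^{1/2} g(B) f(A)^{1/2} = A B⁻¹ A) does not satisfy the inequality Tr(A) ≤ Tr(f(A)^{1/2} g(B) f(A)^{1/2}) for all positive semidefinite A ≤ B in M₂(ℂ). -/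
open Matrix
open scoped ComplexOrder

/-- For `A = [[1,1],[1,1]]` and `B = [[2,1],[1,2]]` in `M₂(ℂ)`: `A` is positive
semidefinite, `B` is positive definite, `A ≤ B` in the Loewner order,
`A B⁻¹ A = (2/3) A`, and `Tr(A B⁻¹ A) < Tr(A)`.  In particular for `f(t) = t²` and
`g(t) = t/f(t) = 1/t` (so `f(A)^{1/2} g(B) f(A)^{1/2} = A B⁻¹ A`), the inequality
`Tr(A) ≤ Tr(f(A)^{1/2} g(B) f(A)^{1/2})` fails for some positive semidefinite `A ≤ B`. -/
theorem square_function_counterexample :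
    (!![1, 1; 1, 1] : Matrix (Fin 2) (Fin 2) ℂ).PosSemidef ∧
    (!![2, 1; 1, 2] : Matrix (Fin 2) (Fin 2) ℂ).PosDef ∧
    ((!![2, 1; 1, 2] - !![1, 1; 1, 1] : Matrix (Fin 2) (Fin 2) ℂ)).PosSemidef ∧
    (!![1, 1; 1, 1] * (!![2, 1; 1, 2] : Matrix (Fin 2) (Fin 2) ℂ)⁻¹ * !![1, 1; 1, 1]
      = (2 / 3 : ℂ) • !![1, 1; 1, 1]) ∧
    (!![1, 1; 1, 1] * (!![2, 1; 1, 2] : Matrix (Fin 2) (Fin 2) ℂ)⁻¹ * !![1, 1; 1, 1]).trace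
      < (!![1, 1; 1, 1] : Matrix (Fin 2) (Fin 2) ℂ).trace := by
  have hA : (!![1, 1; 1, 1] : Matrix (Fin 2) (Fin 2) ℂ).PosSemidef := by
    have h := posSemidef_conjTranspose_mul_self (!![1, 1] : Matrix (Fin 1) (Fin 2) ℂ)
    have : (!![1, 1] : Matrix (Fin 1) (Fin 2) ℂ)ᴴ * (!![1, 1] : Matrix (Fin 1) (Fin 2) ℂ) = !![1, 1; 1, 1] := by
      ext i j; fin_cases i <;> fin_cases j <;>
        simp [Matrix.mul_apply, Fin.sum_univ_succ]
    rwa [this] at h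
  have hB : (!![2, 1; 1, 2] : Matrix (Fin 2) (Fin 2) ℂ).PosDef := by
    have h1 : (!![2, 1; 1, 2] : Matrix (Fin 2) (Fin 2) ℂ) = 1 + !![1, 1; 1, 1] := by
      ext i j; fin_cases i <;> fin_cases j <;> norm_num [Matrix.one_apply]
    rw [h1]
    exact (Matrix.PosDef.one).add_posSemidef hA
  have hinv : (!![2, 1; 1, 2] : Matrix (Fin 2) (Fin 2) ℂ)⁻¹ = (3⁻¹ : ℂ) • !![2, -1; -1, 2] := by
    rw [Matrix.inv_def, Matrix.adjugate_fin_two, Matrix.det_fin_two]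
    norm_num
  have hprod : (!![1, 1; 1, 1] * (!![2, 1; 1, 2] : Matrix (Fin 2) (Fin 2) ℂ)⁻¹ * !![1, 1; 1, 1]
      = (2 / 3 : ℂ) • !![1, 1; 1, 1]) := by
    rw [hinv]
    ext i j; fin_cases i <;> fin_cases j <;>
      simp [Matrix.mul_apply, Fin.sum_univ_succ] <;> ring
  refine ⟨hA, hB, ?_, hprod, ?_⟩
  · have : (!![2, 1; 1, 2] - !![1, 1; 1, 1] : Matrix (Fin 2) (Fin 2) ℂ) = 1 := by
      ext i j; fin_cases i <;> fin_cases j <;> norm_num [Matrix.one_apply]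
    rw [this]; exact Matrix.PosSemidef.one
  · rw [hprod]
    simp [Matrix.trace, Matrix.diag, Fin.sum_univ_succ]
    norm_num [Complex.lt_def]
end

section
/- Let f be a strictly positive differentiable function on (0, ∞) and set g(t) = t / f(t). If there exists t₀ > 0 with f(t₀) < t₀ f'(t₀), then there exist positive definite Hermitian matrices A, B ∈ M₂(ℂ) with A ≤ B in the Loewner order such that Tr(A) > Tr(f(A)^{1/2} g(B) f(A)^{1/2}). -/
open Matrix
open scoped ComplexOrder
open scoped Topology

/-- If `f` is a strictly positive differentiable function on `(0, ∞)`,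
`g(t) = t / f(t)`, and `f(t₀) < t₀ f'(t₀)` for some `t₀ > 0`, then there exist positive
definite Hermitian `A ≤ B` in `M₂(ℂ)` with
`Tr(A) > Tr(f(A)^{1/2} g(B) f(A)^{1/2})`, where `f(A)^{1/2} = (√f)(A)` and `g(B)` are
given by the continuous functional calculus `cfc`. -/
theorem counterexample_of_deriv_condition
    (f : ℝ → ℝ)
    (hfpos : ∀ t : ℝ, 0 < t → 0 < f t)
    (hfd : ∀ t : ℝ, 0 < t → DifferentiableAt ℝ f t)
    (g : ℝ → ℝ)
    (hg : ∀ t : ℝ, 0 < t → g t = t / f t)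
    (t₀ : ℝ) (ht₀ : 0 < t₀) (hder : f t₀ < t₀ * deriv f t₀) :
    ∃ A B : Matrix (Fin 2) (Fin 2) ℂ, A.PosDef ∧ B.PosDef ∧ (B - A).PosSemidef ∧
      (cfc (fun t => Real.sqrt (f t)) A * cfc g B *
        cfc (fun t => Real.sqrt (f t)) A).trace < A.trace := by
  have hf₀ := hfpos t₀ ht₀
  -- g has negative derivative at t₀
  have hgd : HasDerivAt g ((1 * f t₀ - t₀ * deriv f t₀) / (f t₀) ^ 2) t₀ := by
    have h1 : HasDerivAt (fun t => t / f t) ((1 * f t₀ - t₀ * deriv f t₀) / (f t₀) ^ 2) t₀ :=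
      (hasDerivAt_id t₀).div ((hfd t₀ ht₀).hasDerivAt) hf₀.ne'
    refine h1.congr_of_eventuallyEq ?_
    filter_upwards [Ioi_mem_nhds ht₀] with t ht
    exact hg t ht
  have hcneg : (1 * f t₀ - t₀ * deriv f t₀) / (f t₀) ^ 2 < 0 := by
    apply div_neg_of_neg_of_pos
    · linarith
    · positivity
  rw [hasDerivAt_iff_tendsto_slope] at hgd
  have hev : ∀ᶠ x in 𝓝[>] t₀, slope g t₀ x < 0 :=
    (hgd.eventually (Iio_mem_nhds hcneg)).filter_mono
      (nhdsWithin_mono _ (fun x hx => ne_of_gt hx))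
  obtain ⟨b, hslope, hb⟩ := (hev.and self_mem_nhdsWithin).exists
  have hbt : t₀ < b := hb
  have hbpos : 0 < b := ht₀.trans hbt
  -- g b < g t₀
  have hgb : g b < g t₀ := by
    rw [slope_def_field] at hslope
    have := mul_neg_of_neg_of_pos hslope (sub_pos.mpr hbt)
    rw [div_mul_cancel₀ _ (sub_ne_zero.mpr hbt.ne')] at this
    linarith
  -- key real inequality
  have key : Real.sqrt (f t₀) * g b * Real.sqrt (f t₀) < t₀ := by
    have hs : Real.sqrt (f t₀) * g b * Real.sqrt (f t₀) = f t₀ * g b := by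
      rw [mul_comm (Real.sqrt (f t₀)) (g b), mul_assoc, Real.mul_self_sqrt hf₀.le, mul_comm]
    rw [hs]
    have : f t₀ * g b < f t₀ * g t₀ := by
      exact (mul_lt_mul_iff_right₀ hf₀).mpr hgb
    rw [hg t₀ ht₀, mul_div_cancel₀ _ hf₀.ne'] at this
    exact this
  refine ⟨algebraMap ℝ _ t₀, algebraMap ℝ _ b, ?_, ?_, ?_, ?_⟩
  · rw [algebraMap_eq_diagonal]
    exact Matrix.PosDef.diagonal fun i => by
      simpa [Complex.coe_algebraMap] using Complex.zero_lt_real.mpr ht₀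
  · rw [algebraMap_eq_diagonal]
    exact Matrix.PosDef.diagonal fun i => by
      simpa [Complex.coe_algebraMap] using Complex.zero_lt_real.mpr hbpos
  · rw [← map_sub, algebraMap_eq_diagonal]
    refine Matrix.posSemidef_diagonal_iff.mpr fun i => ?_
    simpa [Complex.coe_algebraMap] using Complex.zero_le_real.mpr (by linarith : (0:ℝ) ≤ b - t₀)
  · rw [cfc_algebraMap, cfc_algebraMap, ← _root_.map_mul, ← _root_.map_mul]
    have htr : ∀ r : ℝ, (algebraMap ℝ (Matrix (Fin 2) (Fin 2) ℂ) r).trace = 2 * (r : ℂ) := by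
      intro r
      rw [algebraMap_eq_diagonal, trace_diagonal]
      simp [Complex.coe_algebraMap, two_mul]
    rw [htr, htr]
    have : ((Real.sqrt (f t₀) * g b * Real.sqrt (f t₀) : ℝ) : ℂ) < ((t₀ : ℝ) : ℂ) :=
      Complex.real_lt_real.mpr key
    calc 2 * ((Real.sqrt (f t₀) * g b * Real.sqrt (f t₀) : ℝ) : ℂ)
        < 2 * ((t₀ : ℝ) : ℂ) := by
          exact mul_lt_mul_of_pos_left this (by norm_num)
      _ = 2 * (t₀ : ℂ) := rfl
end

section
/- For every real p > 1 there exist positive definite Hermitian matrices A, B ∈ M₂(ℂ) with A ≤ B in the Loewner order such that Tr(A) > Tr(A^{p/2} B^{1−p} A^{p/2}), where the matrix powers are defined via the continuous functional calculus. In other words, for f(t) = t^p with p > 1 and g(t) = t/f(t) = t^{1−p}, the inequality Tr(A) ≤ Tr(f(A)^{1/2} g(B) f(A)^{1/2}) fails for some 0 < A ≤ B. -/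
open Matrix
open scoped ComplexOrder

/-- For every real `p > 1` there exist positive definite Hermitian `A ≤ B` in `M₂(ℂ)`
with `Tr(A) > Tr(A^{p/2} B^{1−p} A^{p/2})`, the real matrix powers being given by the
continuous functional calculus `cfc` (i.e. `t ↦ t ^ r` with real exponent).  In other
words, for `f(t) = t^p` and `g(t) = t/f(t) = t^{1−p}`, the inequality
`Tr(A) ≤ Tr(f(A)^{1/2} g(B) f(A)^{1/2})` fails for some `0 < A ≤ B`. -/
theorem power_function_counterexample (p : ℝ) (hp : 1 < p) :
    ∃ A B : Matrix (Fin 2) (Fin 2) ℂ, A.PosDef ∧ B.PosDef ∧ (B - A).PosSemidef ∧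
      (cfc (fun t : ℝ => t ^ (p / 2)) A * cfc (fun t : ℝ => t ^ (1 - p)) B *
        cfc (fun t : ℝ => t ^ (p / 2)) A).trace < A.trace := by
  refine ⟨1, algebraMap ℝ (Matrix (Fin 2) (Fin 2) ℂ) 2, Matrix.PosDef.one, ?_, ?_, ?_⟩
  · rw [Matrix.algebraMap_eq_diagonal]
    exact Matrix.PosDef.diagonal (fun i => by norm_num)
  · have h3 : (algebraMap ℝ (Matrix (Fin 2) (Fin 2) ℂ) 2) - 1 = 1 := by
      rw [← map_one (algebraMap ℝ (Matrix (Fin 2) (Fin 2) ℂ)), ← map_sub]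
      norm_num
    rw [h3]
    exact Matrix.PosSemidef.one
  · rw [cfc_apply_one, cfc_algebraMap, Real.one_rpow, _root_.map_one, one_mul, mul_one]
    have h2 : (2 : ℝ) ^ (1 - p) < 1 :=
      Real.rpow_lt_one_of_one_lt_of_neg (by norm_num) (by linarith)
    have htr : ∀ c : ℝ, (algebraMap ℝ (Matrix (Fin 2) (Fin 2) ℂ) c).trace = 2 * (c : ℂ) := by
      intro c
      simp [Matrix.algebraMap_eq_diagonal, Matrix.trace_diagonal, Fin.sum_univ_two,
        algebraMap, Algebra.algebraMap]
    rw [htr, Matrix.trace_one]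
    have : ((2 * 2 ^ (1 - p) : ℝ) : ℂ) < ((2 : ℝ) : ℂ) :=
      Complex.real_lt_real.mpr (by linarith)
    push_cast at this
    simpa using this
end
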